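/- Let a(n) be the number of 4 × 2n 0-1 matrices in which every row has exactly n ones and every column has exactly 2 ones. Then for all positive integers n: 36·(2n+3)·(2n+1)·(n+1)·a(n) − 2·(2n+3)·(10n² + 30n + 23)·a(n+1) + (n+2)³·a(n+2) = 0. -/

import Mathlib

open Finset

/-- `a n` is the number of `4 × 2n` 0-1 matrices in which every row has exactly `n`
ones and every column has exactly `2` ones. -/
def balanced4Count (n : ℕ) : ℕ :=
  Fintype.card {M : Fin 4 → Fin (2 * n) → Bool //
    (∀ i, (Finset.univ.filter fun j => M i j = true).card = n) ∧
    (∀ j, (Finset.univ.filter fun i => M i j = true).card = 2)}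

open Nat


lemma card_filter_subtype {α : Type} [Fintype α] [DecidableEq α]
    (p : α → Prop) [DecidablePred p] (q : α → Prop) [DecidablePred q]
    (h : ∀ a, q a → p a) :
    (Finset.univ.filter fun a : {x // p x} => q a.val).card
      = (Finset.univ.filter q).card := by
  apply Finset.card_bij (fun a _ => a.val)
  · intro a ha
    simp only [Finset.mem_filter, Finset.mem_univ, true_and] at *
    exact ha
  · intro a ha a' ha' hh
    exact Subtype.ext hh
  · intro a ha
    simp only [Finset.mem_filter, Finset.mem_univ, true_and] at ha
    exact ⟨⟨a, h a ha⟩, by simp [ha]⟩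

theorem card_fiber_multinomial {β : Type} [Fintype β] [DecidableEq β] (s : Finset β) (c : β → ℕ) :
    ∀ (α : Type) [Fintype α] [DecidableEq α],
      Fintype.card α = ∑ b ∈ s, c b →
      (Finset.univ.filter fun T : α → β =>
          (∀ a, T a ∈ s) ∧ ∀ b ∈ s, (Finset.univ.filter fun a => T a = b).card = c b).card
        = Nat.multinomial s c := by
  induction s using Finset.cons_induction with
  | empty =>
      intro α _ _ hcard
      simp only [Finset.sum_empty] at hcard
      haveI : IsEmpty α := Fintype.card_eq_zero_iff.mp hcard
      rw [Finset.filter_true_of_mem (fun T _ => ⟨fun a => (IsEmpty.false a).elim,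
            fun b hb => (Finset.notMem_empty b hb).elim⟩)]
      rw [Finset.card_univ, Fintype.card_fun, hcard, pow_zero, Nat.multinomial_empty]
  | cons b s' hb ih =>
      intro α _ _ hcard
      rw [Finset.sum_cons] at hcard
      have h1 : ∀ T ∈ (Finset.univ.filter fun T : α → β =>
          (∀ a, T a ∈ cons b s' hb) ∧
            ∀ b' ∈ cons b s' hb, (Finset.univ.filter fun a => T a = b').card = c b'),
          (Finset.univ.filter fun a => T a = b) ∈ Finset.powersetCard (c b) Finset.univ := by
        intro T hT
        rw [Finset.mem_filter] at hT
        rw [Finset.mem_powersetCard]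
        exact ⟨Finset.subset_univ _, hT.2.2 b (Finset.mem_cons_self b s')⟩
      rw [Finset.card_eq_sum_card_fiberwise h1]
      have hcell : ∀ A ∈ Finset.powersetCard (c b) (Finset.univ : Finset α),
          ((Finset.univ.filter fun T : α → β =>
            (∀ a, T a ∈ cons b s' hb) ∧
              ∀ b' ∈ cons b s' hb, (Finset.univ.filter fun a => T a = b').card = c b').filter
            fun T => (Finset.univ.filter fun a => T a = b) = A).card
          = Nat.multinomial s' c := by
        intro A hA
        rw [Finset.mem_powersetCard] at hA
        have hAcard : A.card = c b := hA.2
        have hcompl : Fintype.card {a : α // a ∉ A} = ∑ b' ∈ s', c b' := by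
          have h2 : Fintype.card {a : α // a ∈ A} = A.card := Fintype.card_coe A
          have h3 : Fintype.card {a : α // ¬ a ∈ A} =
              Fintype.card α - Fintype.card {a : α // a ∈ A} :=
            Fintype.card_subtype_compl _
          rw [h3, h2, hAcard, hcard]
          omega
        rw [← ih {a : α // a ∉ A} hcompl]
        rw [Finset.filter_filter]
        apply Finset.card_bij' (fun T _ => fun a : {a : α // a ∉ A} => T a.val)
          (fun T' _ => fun a : α => if h : a ∈ A then b else T' ⟨a, h⟩)
        · -- maps into target
          intro T hT
          rw [Finset.mem_filter] at hT
          obtain ⟨-, ⟨hmem, hfib⟩, hfibA⟩ := hT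
          have hAiff : ∀ a : α, a ∈ A ↔ T a = b := by
            intro a
            rw [← hfibA]
            simp
          rw [Finset.mem_filter]
          refine ⟨Finset.mem_univ _, ?_, ?_⟩
          · intro a
            have := hmem a.val
            rw [Finset.mem_cons] at this
            rcases this with h | h
            · exact absurd ((hAiff a.val).mpr h) a.2
            · exact h
          · intro b' hb'
            have hbne : b' ≠ b := by rintro rfl; exact hb hb'
            rw [card_filter_subtype (fun x => x ∉ A) (fun a => T a = b')
                (fun a ha => fun hmemA => hbne (by rw [← ha, (hAiff a).mp hmemA]))]
            exact hfib b' (Finset.mem_cons_of_mem hb')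
        · -- reverse maps into source
          intro T' hT'
          rw [Finset.mem_filter] at hT'
          obtain ⟨-, hmem, hfib⟩ := hT'
          rw [Finset.mem_filter]
          have hfibA : (Finset.univ.filter fun a => (if h : a ∈ A then b else T' ⟨a, h⟩) = b) = A := by
            ext a
            simp only [Finset.mem_filter, Finset.mem_univ, true_and]
            by_cases h : a ∈ A
            · simp [h]
            · simp only [h, dif_neg, not_false_iff, iff_false]
              intro hEq
              exact hb (hEq ▸ hmem ⟨a, h⟩)
          refine ⟨Finset.mem_univ _, ⟨?_, ?_⟩, hfibA⟩
          · intro a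
            by_cases h : a ∈ A
            · simp only [h, dif_pos]
              exact Finset.mem_cons_self b s'
            · simp only [h, dif_neg, not_false_iff]
              exact Finset.mem_cons_of_mem (hmem ⟨a, h⟩)
          · intro b' hb'
            rw [Finset.mem_cons] at hb'
            rcases hb' with rfl | hb'
            · rw [hfibA]; exact hAcard
            · have hbne : b' ≠ b := by rintro rfl; exact hb hb'
              rw [← hfib b' hb']
              rw [← card_filter_subtype (fun x => x ∉ A)
                  (fun a => (if h : a ∈ A then b else T' ⟨a, h⟩) = b')
                  (fun a ha => fun hmemA => hbne (by rw [← ha]; simp [hmemA]))]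
              congr 1
              apply Finset.filter_congr
              intro a _
              simp [a.2]
        · -- left inverse
          intro T hT
          rw [Finset.mem_filter] at hT
          obtain ⟨-, -, hfibA⟩ := hT
          have hAiff : ∀ a : α, a ∈ A ↔ T a = b := by
            intro a; rw [← hfibA]; simp
          funext a
          by_cases h : a ∈ A
          · simp [h, ((hAiff a).mp h).symm]
          · simp [h]
        · -- right inverse
          intro T' hT'
          funext a
          simp [a.2]
      rw [Finset.sum_congr rfl hcell, Finset.sum_const, Finset.card_powersetCard,
          Finset.card_univ, hcard, smul_eq_mul, Nat.multinomial_cons]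

def S4 : Finset (Finset (Fin 4)) :=
  {({0,1} : Finset (Fin 4)), {2,3}, {0,2}, {1,3}, {0,3}, {1,2}}

lemma mem_S4 : ∀ p : Finset (Fin 4), p ∈ S4 ↔ p.card = 2 := by decide

lemma sum_S4 {M : Type} [AddCommMonoid M] (f : Finset (Fin 4) → M) :
    ∑ p ∈ S4, f p = f {0,1} + f {2,3} + f {0,2} + f {1,3} + f {0,3} + f {1,2} := by
  rw [show S4 = insert {0,1} (insert {2,3} (insert {0,2} (insert {1,3}
      (insert {0,3} {({1,2} : Finset (Fin 4))})))) from rfl]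
  rw [Finset.sum_insert (by decide), Finset.sum_insert (by decide), Finset.sum_insert (by decide),
      Finset.sum_insert (by decide), Finset.sum_insert (by decide), Finset.sum_singleton]
  abel

lemma prod_S4 {M : Type} [CommMonoid M] (f : Finset (Fin 4) → M) :
    ∏ p ∈ S4, f p = f {0,1} * f {2,3} * f {0,2} * f {1,3} * f {0,3} * f {1,2} := by
  rw [show S4 = insert {0,1} (insert {2,3} (insert {0,2} (insert {1,3}
      (insert {0,3} {({1,2} : Finset (Fin 4))})))) from rfl]
  rw [Finset.prod_insert (by decide), Finset.prod_insert (by decide), Finset.prod_insert (by decide),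
      Finset.prod_insert (by decide), Finset.prod_insert (by decide), Finset.prod_singleton]
  simp [mul_assoc]

lemma sum3' {M : Type} [AddCommMonoid M] (a b c : Finset (Fin 4)) (hab : a ≠ b) (hac : a ≠ c)
    (hbc : b ≠ c) (f : Finset (Fin 4) → M) :
    ∑ p ∈ ({a, b, c} : Finset (Finset (Fin 4))), f p = f a + f b + f c := by
  rw [show ({a,b,c} : Finset (Finset (Fin 4))) = insert a (insert b {c}) from rfl,
      Finset.sum_insert (by simp [hab, hac]), Finset.sum_insert (by simp [hbc]),
      Finset.sum_singleton]
  abel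

def cf (i j k : ℕ) : Finset (Fin 4) → ℕ := fun p =>
  if p = {0,1} ∨ p = {2,3} then i else if p = {0,2} ∨ p = {1,3} then j else k

lemma cf_01 (i j k : ℕ) : cf i j k {0,1} = i := by rw [cf, if_pos (by decide)]
lemma cf_23 (i j k : ℕ) : cf i j k {2,3} = i := by rw [cf, if_pos (by decide)]
lemma cf_02 (i j k : ℕ) : cf i j k {0,2} = j := by rw [cf, if_neg (by decide), if_pos (by decide)]
lemma cf_13 (i j k : ℕ) : cf i j k {1,3} = j := by rw [cf, if_neg (by decide), if_pos (by decide)]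
lemma cf_03 (i j k : ℕ) : cf i j k {0,3} = k := by rw [cf, if_neg (by decide), if_neg (by decide)]
lemma cf_12 (i j k : ℕ) : cf i j k {1,2} = k := by rw [cf, if_neg (by decide), if_neg (by decide)]

lemma cover_eq (n : ℕ) (T : Fin (2*n) → Finset (Fin 4)) (hT : ∀ j, T j ∈ S4) (i : Fin 4) :
    (Finset.univ.filter fun j => i ∈ T j).card
      = ∑ p ∈ S4.filter (fun p => i ∈ p), (Finset.univ.filter fun j => T j = p).card := by
  rw [Finset.card_eq_sum_card_fiberwise (f := fun j => T j)
      (t := S4.filter (fun p => i ∈ p))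
      (fun j hj => by
        rw [Finset.mem_coe, Finset.mem_filter] at hj ⊢
        exact ⟨hT j, hj.2⟩)]
  apply Finset.sum_congr rfl
  intro p hp
  rw [Finset.mem_filter] at hp
  rw [Finset.filter_filter]
  congr 1
  apply Finset.filter_congr
  intro j _
  constructor
  · exact fun h => h.2
  · exact fun h => ⟨h ▸ hp.2, h⟩

lemma filt0 : S4.filter (fun p => (0 : Fin 4) ∈ p) = {({0,1} : Finset (Fin 4)), {0,2}, {0,3}} := by decide
lemma filt1 : S4.filter (fun p => (1 : Fin 4) ∈ p) = {({0,1} : Finset (Fin 4)), {1,3}, {1,2}} := by decide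
lemma filt2 : S4.filter (fun p => (2 : Fin 4) ∈ p) = {({2,3} : Finset (Fin 4)), {0,2}, {1,2}} := by decide
lemma filt3 : S4.filter (fun p => (3 : Fin 4) ∈ p) = {({2,3} : Finset (Fin 4)), {1,3}, {0,3}} := by decide

lemma covers_system (n : ℕ) (T : Fin (2*n) → Finset (Fin 4)) (hT : ∀ j, T j ∈ S4)
    (hcov : ∀ i : Fin 4, (Finset.univ.filter fun j => i ∈ T j).card = n) :
    (fun p => (Finset.univ.filter fun j => T j = p).card) {0,1}
        = (fun p => (Finset.univ.filter fun j => T j = p).card) {2,3} ∧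
    (fun p => (Finset.univ.filter fun j => T j = p).card) {0,2}
        = (fun p => (Finset.univ.filter fun j => T j = p).card) {1,3} ∧
    (fun p => (Finset.univ.filter fun j => T j = p).card) {0,3}
        = (fun p => (Finset.univ.filter fun j => T j = p).card) {1,2} ∧
    (fun p => (Finset.univ.filter fun j => T j = p).card) {0,1}
      + (fun p => (Finset.univ.filter fun j => T j = p).card) {0,2}
      + (fun p => (Finset.univ.filter fun j => T j = p).card) {0,3} = n := by
  have h0 := (cover_eq n T hT 0).symm.trans (hcov 0)
  have h1 := (cover_eq n T hT 1).symm.trans (hcov 1)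
  have h2 := (cover_eq n T hT 2).symm.trans (hcov 2)
  have h3 := (cover_eq n T hT 3).symm.trans (hcov 3)
  rw [filt0, sum3' _ _ _ (by decide) (by decide) (by decide)] at h0
  rw [filt1, sum3' _ _ _ (by decide) (by decide) (by decide)] at h1
  rw [filt2, sum3' _ _ _ (by decide) (by decide) (by decide)] at h2
  rw [filt3, sum3' _ _ _ (by decide) (by decide) (by decide)] at h3
  simp only
  omega



lemma balanced_eq_filter (n : ℕ) :
    balanced4Count n = (Finset.univ.filter fun T : Fin (2*n) → Finset (Fin 4) =>
      (∀ i : Fin 4, (Finset.univ.filter fun j => i ∈ T j).card = n) ∧ (∀ j, T j ∈ S4)).card := by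
  rw [balanced4Count, ← Fintype.card_subtype]
  apply Fintype.card_congr
  refine ⟨fun M => ⟨fun j => Finset.univ.filter (fun i => M.1 i j = true),
      fun i => by simpa using M.2.1 i,
      fun j => (mem_S4 _).mpr (by simpa using M.2.2 j)⟩,
    fun T => ⟨fun i j => decide (i ∈ T.1 j),
      fun i => by simpa using T.2.1 i,
      fun j => by
        have h2 := (mem_S4 _).mp (T.2.2 j)
        simpa [Finset.filter_univ_mem] using h2⟩,
    fun M => Subtype.ext (funext fun i => funext fun j => by
      by_cases h : M.1 i j = true <;> simp [h]),
    fun T => Subtype.ext (funext fun j => by ext i; simp)⟩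

lemma S4_mem_cases {p : Finset (Fin 4)} (hp : p ∈ S4) :
    p = {0,1} ∨ p = {2,3} ∨ p = {0,2} ∨ p = {1,3} ∨ p = {0,3} ∨ p = {1,2} := by
  simp only [S4, Finset.mem_insert, Finset.mem_singleton] at hp
  tauto

lemma fin4_cases : ∀ i : Fin 4, i = 0 ∨ i = 1 ∨ i = 2 ∨ i = 3 := by decide

theorem balanced_eq_sum (n : ℕ) :
    balanced4Count n = ∑ z ∈ (Finset.range (n+1)).sigma (fun i => Finset.range (n+1-i)),
      Nat.multinomial S4 (cf z.1 z.2 (n - z.1 - z.2)) := by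
  rw [balanced_eq_filter]
  have hmap : ∀ T ∈ (Finset.univ.filter fun T : Fin (2*n) → Finset (Fin 4) =>
      (∀ i : Fin 4, (Finset.univ.filter fun j => i ∈ T j).card = n) ∧ (∀ j, T j ∈ S4)),
      (⟨(Finset.univ.filter fun j => T j = {0,1}).card,
        (Finset.univ.filter fun j => T j = {0,2}).card⟩ : (_ : ℕ) × ℕ)
        ∈ (Finset.range (n+1)).sigma (fun i => Finset.range (n+1-i)) := by
    intro T hT
    rw [Finset.mem_filter] at hT
    obtain ⟨-, hcov, hmem⟩ := hT
    obtain ⟨-, -, -, hsum⟩ := covers_system n T hmem hcov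
    simp only at hsum
    rw [Finset.mem_sigma, Finset.mem_range, Finset.mem_range]
    simp only
    omega
  rw [Finset.card_eq_sum_card_fiberwise hmap]
  apply Finset.sum_congr rfl
  rintro ⟨i0, j0⟩ hz
  rw [Finset.mem_sigma, Finset.mem_range, Finset.mem_range] at hz
  simp only at hz
  have hij : i0 + j0 ≤ n := by omega
  set k := n - i0 - j0 with hk
  have hcard : Fintype.card (Fin (2*n)) = ∑ p ∈ S4, cf i0 j0 k p := by
    rw [Fintype.card_fin, sum_S4, cf_01, cf_23, cf_02, cf_13, cf_03, cf_12]
    omega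
  rw [← card_fiber_multinomial S4 (cf i0 j0 k) (Fin (2*n)) hcard]
  rw [Finset.filter_filter]
  congr 1
  ext T
  simp only [Finset.mem_filter, Finset.mem_univ, true_and, Sigma.ext_iff, heq_eq_eq]
  constructor
  · rintro ⟨⟨hcov, hmem⟩, hx1, hx2⟩
    obtain ⟨e1, e2, e3, hsum⟩ := covers_system n T hmem hcov
    simp only at e1 e2 e3 hsum
    refine ⟨hmem, ?_⟩
    intro p hp
    rcases S4_mem_cases hp with rfl | rfl | rfl | rfl | rfl | rfl
    · rw [cf_01]; omega
    · rw [cf_23]; omega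
    · rw [cf_02]; omega
    · rw [cf_13]; omega
    · rw [cf_03]; omega
    · rw [cf_12]; omega
  · rintro ⟨hmem, hfib⟩
    have v01 := hfib {0,1} (by decide); rw [cf_01] at v01
    have v23 := hfib {2,3} (by decide); rw [cf_23] at v23
    have v02 := hfib {0,2} (by decide); rw [cf_02] at v02
    have v13 := hfib {1,3} (by decide); rw [cf_13] at v13
    have v03 := hfib {0,3} (by decide); rw [cf_03] at v03
    have v12 := hfib {1,2} (by decide); rw [cf_12] at v12
    refine ⟨⟨?_, hmem⟩, v01, v02⟩
    intro i
    rw [cover_eq n T hmem i]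
    rcases fin4_cases i with rfl | rfl | rfl | rfl
    · rw [filt0, sum3' _ _ _ (by decide) (by decide) (by decide)]; omega
    · rw [filt1, sum3' _ _ _ (by decide) (by decide) (by decide)]; omega
    · rw [filt2, sum3' _ _ _ (by decide) (by decide) (by decide)]; omega
    · rw [filt3, sum3' _ _ _ (by decide) (by decide) (by decide)]; omega


def u (m k : ℕ) : ℕ := (2*m).choose m * (m.choose k)^2 * ((2*k).choose k)

def Fc (m : ℕ) : ℕ := ∑ k ∈ Finset.range (m+1), u m k

lemma u_eq_zero {m k : ℕ} (h : m < k) : u m k = 0 := by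
  simp [u, Nat.choose_eq_zero_of_lt h]

lemma Fc_eq (m N : ℕ) (h : m < N) : (Fc m : ℚ) = ∑ k ∈ Finset.range N, (u m k : ℚ) := by
  rw [Fc]
  push_cast
  apply Finset.sum_subset
  · intro x hx
    simp only [Finset.mem_range] at *
    omega
  · intro x _ hx
    simp only [Finset.mem_range, not_lt] at hx
    rw [u_eq_zero (by omega)]
    norm_num

lemma u_cast (m k : ℕ) (h : k ≤ m) :
    (u m k : ℚ) = (2*m)! * (2*k)! / (((k)! : ℚ)^4 * ((m-k)! : ℚ)^2) := by
  have h1 : m ≤ 2*m := by omega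
  have h2 : k ≤ 2*k := by omega
  have e1 : 2*m - m = m := by omega
  have e2 : 2*k - k = k := by omega
  rw [u]
  push_cast
  rw [Nat.cast_choose ℚ h1, Nat.cast_choose ℚ h, Nat.cast_choose ℚ h2, e1, e2]
  have f1 : ((m)! : ℚ) ≠ 0 := by positivity
  have f2 : ((k)! : ℚ) ≠ 0 := by positivity
  have f3 : (((m-k))! : ℚ) ≠ 0 := by positivity
  have f4 : (((2*k))! : ℚ) ≠ 0 := by positivity
  field_simp

theorem Fc_rec (n : ℕ) :
    36 * (2 * (n : ℚ) + 3) * (2 * n + 1) * (n + 1) * (Fc n : ℚ)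
      - 2 * (2 * (n : ℚ) + 3) * (10 * n ^ 2 + 30 * n + 23) * (Fc (n + 1) : ℚ)
      + ((n : ℚ) + 2) ^ 3 * (Fc (n + 2) : ℚ) = 0 := by
  set G : ℕ → ℚ := fun k =>
    4 * (2 * (n : ℚ) + 1) * (2 * n + 3) * (n + 1) * (k : ℚ)^3 * (3 * (k : ℚ) - 4 * n - 8)
      * ((2*n)! : ℚ) * ((2*k)! : ℚ) / (((k)! : ℚ)^4 * (((n+2-k))! : ℚ)^2) with hG
  set combo : ℕ → ℚ := fun k =>
    36 * (2 * (n : ℚ) + 3) * (2 * n + 1) * (n + 1) * (u n k : ℚ)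
      - 2 * (2 * (n : ℚ) + 3) * (10 * n ^ 2 + 30 * n + 23) * (u (n+1) k : ℚ)
      + ((n : ℚ) + 2) ^ 3 * (u (n+2) k : ℚ) with hcombo
  have hstep : ∀ k ∈ Finset.range (n+2), combo k = G (k+1) - G k := by
    intro k hk
    rw [Finset.mem_range] at hk
    rcases Nat.lt_or_ge k (n+1) with hkn | hkn
    · -- k ≤ n
      obtain ⟨d, hd⟩ : ∃ d, n = k + d := ⟨n - k, by omega⟩
      subst hd
      have c1 : (u (k+d) k : ℚ) = ((2*(k+d))! : ℚ) * ((2*k)! : ℚ) / (((k)! : ℚ)^4 * (((d))! : ℚ)^2) := by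
        rw [u_cast _ _ (by omega), show k+d-k = d by omega]
      have c2 : (u (k+d+1) k : ℚ) = ((2*(k+d)+2)! : ℚ) * ((2*k)! : ℚ) / (((k)! : ℚ)^4 * (((d+1))! : ℚ)^2) := by
        rw [u_cast _ _ (by omega), show 2*(k+d+1) = 2*(k+d)+2 by ring, show k+d+1-k = d+1 by omega]
      have c3 : (u (k+d+2) k : ℚ) = ((2*(k+d)+4)! : ℚ) * ((2*k)! : ℚ) / (((k)! : ℚ)^4 * (((d+2))! : ℚ)^2) := by
        rw [u_cast _ _ (by omega), show 2*(k+d+2) = 2*(k+d)+4 by ring, show k+d+2-k = d+2 by omega]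
      have gk : (k+d) + 2 - k = d + 2 := by omega
      have gk1 : (k+d) + 2 - (k+1) = d + 1 := by omega
      rw [hcombo, hG]
      simp only [c1, c2, c3, gk, gk1]
      have e1 : ((2*(k+d)+2)! : ℚ) = (2*(k:ℚ)+2*d+2) * (2*k+2*d+1) * ((2*(k+d))! : ℚ) := by
        rw [show 2*(k+d)+2 = (2*(k+d)+1) + 1 from rfl, Nat.factorial_succ,
            show 2*(k+d)+1 = (2*(k+d)) + 1 from rfl, Nat.factorial_succ]
        push_cast; ring
      have e2 : ((2*(k+d)+4)! : ℚ) = (2*(k:ℚ)+2*d+4) * (2*k+2*d+3) * (2*k+2*d+2) * (2*k+2*d+1) * ((2*(k+d))! : ℚ) := by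
        rw [show 2*(k+d)+4 = (2*(k+d)+3)+1 from rfl, Nat.factorial_succ,
            show 2*(k+d)+3 = (2*(k+d)+2)+1 from rfl, Nat.factorial_succ,
            show 2*(k+d)+2 = (2*(k+d)+1)+1 from rfl, Nat.factorial_succ,
            show 2*(k+d)+1 = (2*(k+d))+1 from rfl, Nat.factorial_succ]
        push_cast; ring
      have e3 : ((2*(k+1))! : ℚ) = (2*(k:ℚ)+2) * (2*k+1) * ((2*k)! : ℚ) := by
        rw [show 2*(k+1) = (2*k+1) + 1 by ring, Nat.factorial_succ,
            show 2*k+1 = (2*k)+1 from rfl, Nat.factorial_succ]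
        push_cast; ring
      have e4 : (((k+1))! : ℚ) = ((k:ℚ)+1) * ((k)! : ℚ) := by
        rw [Nat.factorial_succ]; push_cast; ring
      have e5 : (((d+1))! : ℚ) = ((d:ℚ)+1) * ((d)! : ℚ) := by
        rw [Nat.factorial_succ]; push_cast; ring
      have e6 : (((d+2))! : ℚ) = ((d:ℚ)+2) * ((d:ℚ)+1) * ((d)! : ℚ) := by
        rw [show d+2 = (d+1)+1 from rfl, Nat.factorial_succ, Nat.factorial_succ]; push_cast; ring
      simp only [e2, e1, e3, e4, e5, e6]
      have f1 : ((k)! : ℚ) ≠ 0 := by positivity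
      have f2 : ((d)! : ℚ) ≠ 0 := by positivity
      have f3 : ((2*k)! : ℚ) ≠ 0 := by positivity
      have f4 : ((2*(k+d))! : ℚ) ≠ 0 := by positivity
      have f5 : ((k:ℚ)+1) ≠ 0 := by positivity
      have f6 : ((d:ℚ)+1) ≠ 0 := by positivity
      have f7 : ((d:ℚ)+2) ≠ 0 := by positivity
      push_cast
      field_simp
      ring
    · -- k = n+1
      have hk1 : k = n+1 := by omega
      subst hk1
      have onn : n+1+1 = n+2 := rfl
      have c1 : (u n (n+1) : ℚ) = 0 := by
        rw [u_eq_zero (by omega)]; norm_num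
      have c2 : (u (n+1) (n+1) : ℚ) = ((2*(n+1))! : ℚ) * ((2*(n+1))! : ℚ) / ((((n+1))! : ℚ)^4 * ((0)! : ℚ)^2) := by
        rw [u_cast _ _ (by omega), show n+1-(n+1) = 0 by omega]
      have c3 : (u (n+2) (n+1) : ℚ) = ((2*(n+2))! : ℚ) * ((2*(n+1))! : ℚ) / ((((n+1))! : ℚ)^4 * ((1)! : ℚ)^2) := by
        rw [u_cast _ _ (by omega), show n+2-(n+1) = 1 by omega]
      have gk : n + 2 - (n+1) = 1 := by omega
      rw [hcombo, hG]
      simp only [onn, c1, c2, c3, gk, show n+2-(n+2) = 0 by omega]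
      have e2 : ((2*(n+2))! : ℚ) = (2*(n:ℚ)+4) * (2*n+3) * ((2*(n+1))! : ℚ) := by
        rw [show 2*(n+2) = (2*(n+1)+1)+1 by ring, Nat.factorial_succ,
            show 2*(n+1)+1 = (2*(n+1))+1 from rfl, Nat.factorial_succ]
        push_cast; ring
      have e1 : ((2*(n+1))! : ℚ) = (2*(n:ℚ)+2) * (2*n+1) * ((2*n)! : ℚ) := by
        rw [show 2*(n+1) = (2*n+1)+1 by ring, Nat.factorial_succ,
            show 2*n+1 = (2*n)+1 from rfl, Nat.factorial_succ]
        push_cast; ring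
      have e4 : (((n+2))! : ℚ) = ((n:ℚ)+2) * (((n+1))! : ℚ) := by
        rw [show n+2 = (n+1)+1 from rfl, Nat.factorial_succ]; push_cast; ring
      simp only [e2, e4, e1]
      have f1 : (((n+1))! : ℚ) ≠ 0 := by positivity
      have f2 : ((2*n)! : ℚ) ≠ 0 := by positivity
      have f3 : ((n:ℚ)+1) ≠ 0 := by positivity
      have f4 : ((n:ℚ)+2) ≠ 0 := by positivity
      simp only [Nat.factorial_zero, Nat.factorial_one]
      push_cast
      field_simp
      ring
  have htop : combo (n+2) = - G (n+2) := by
    have c1 : (u n (n+2) : ℚ) = 0 := by rw [u_eq_zero (by omega)]; norm_num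
    have c2 : (u (n+1) (n+2) : ℚ) = 0 := by rw [u_eq_zero (by omega)]; norm_num
    have c3 : (u (n+2) (n+2) : ℚ) = ((2*(n+2))! : ℚ) * ((2*(n+2))! : ℚ) / ((((n+2))! : ℚ)^4 * ((0)! : ℚ)^2) := by
      rw [u_cast _ _ (by omega), show n+2-(n+2) = 0 by omega]
    rw [hcombo, hG]
    simp only [c1, c2, c3, show n+2-(n+2) = 0 by omega]
    have e1 : ((2*(n+2))! : ℚ) = (2*(n:ℚ)+4) * (2*n+3) * (2*n+2) * (2*n+1) * ((2*n)! : ℚ) := by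
      rw [show 2*(n+2) = (2*n+3)+1 by ring, Nat.factorial_succ,
          show 2*n+3 = (2*n+2)+1 from rfl, Nat.factorial_succ,
          show 2*n+2 = (2*n+1)+1 from rfl, Nat.factorial_succ,
          show 2*n+1 = (2*n)+1 from rfl, Nat.factorial_succ]
      push_cast; ring
    have e4 : (((n+2))! : ℚ) = ((n:ℚ)+2) * ((n:ℚ)+1) * (((n))! : ℚ) := by
      rw [show n+2 = (n+1)+1 from rfl, Nat.factorial_succ, Nat.factorial_succ]
      push_cast; ring
    simp only [e1, e4]
    have f1 : (((n))! : ℚ) ≠ 0 := by positivity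
    have f2 : ((2*n)! : ℚ) ≠ 0 := by positivity
    have f3 : ((n:ℚ)+1) ≠ 0 := by positivity
    have f4 : ((n:ℚ)+2) ≠ 0 := by positivity
    simp only [Nat.factorial_zero]
    push_cast
    field_simp
    ring
  have hG0 : G 0 = 0 := by
    rw [hG]; norm_num
  have hsum : ∑ k ∈ Finset.range (n+3), combo k = 0 := by
    rw [show n+3 = (n+2)+1 from rfl, Finset.sum_range_succ, Finset.sum_congr rfl hstep,
        Finset.sum_range_sub G (n+2), htop, hG0]
    ring
  calc 36 * (2 * (n : ℚ) + 3) * (2 * n + 1) * (n + 1) * (Fc n : ℚ)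
      - 2 * (2 * (n : ℚ) + 3) * (10 * n ^ 2 + 30 * n + 23) * (Fc (n + 1) : ℚ)
      + ((n : ℚ) + 2) ^ 3 * (Fc (n + 2) : ℚ)
      = ∑ k ∈ Finset.range (n+3), combo k := by
        rw [Fc_eq n (n+3) (by omega), Fc_eq (n+1) (n+3) (by omega), Fc_eq (n+2) (n+3) (by omega)]
        rw [Finset.mul_sum, Finset.mul_sum, Finset.mul_sum, ← Finset.sum_sub_distrib,
            ← Finset.sum_add_distrib]
    _ = 0 := hsum

lemma sum_choose_sq (m : ℕ) : ∑ j ∈ Finset.range (m+1), (m.choose j)^2 = (2*m).choose m := by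
  rw [two_mul, Nat.add_choose_eq, Finset.Nat.sum_antidiagonal_eq_sum_range_succ_mk]
  apply Finset.sum_congr rfl
  intro j hj
  rw [Finset.mem_range] at hj
  rw [Nat.choose_symm (by omega), sq]

lemma multinomial_cast (i j k n : ℕ) (h : i + j + k = n) :
    (Nat.multinomial S4 (cf i j k) : ℚ)
      = ((2*n)! : ℚ) / (((i)! : ℚ)^2 * ((j)! : ℚ)^2 * ((k)! : ℚ)^2) := by
  have spec := Nat.multinomial_spec S4 (cf i j k)
  have hprod : ∏ p ∈ S4, (cf i j k p)! = ((i)! * (i)!) * ((j)! * (j)!) * ((k)! * (k)!) := by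
    rw [prod_S4]
    rw [cf_01, cf_23, cf_02, cf_13, cf_03, cf_12]
    ring
  have hsum : ∑ p ∈ S4, cf i j k p = 2*n := by
    rw [sum_S4, cf_01, cf_23, cf_02, cf_13, cf_03, cf_12]
    omega
  rw [hprod, hsum] at spec
  have f1 : ((i)! : ℚ) ≠ 0 := by positivity
  have f2 : ((j)! : ℚ) ≠ 0 := by positivity
  have f3 : ((k)! : ℚ) ≠ 0 := by positivity
  rw [eq_div_iff (by positivity)]
  have := congrArg (fun x : ℕ => (x : ℚ)) spec
  push_cast at this ⊢
  linarith [this]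

lemma innerSumQ (i m : ℕ) :
    ∑ j ∈ Finset.range (m+1),
        ((2*(i+m))! : ℚ) / (((i)! : ℚ)^2 * ((j)! : ℚ)^2 * (((m-j))! : ℚ)^2)
      = (u (i+m) m : ℚ) := by
  have hstep : ∀ j ∈ Finset.range (m+1),
      ((2*(i+m))! : ℚ) / (((i)! : ℚ)^2 * ((j)! : ℚ)^2 * (((m-j))! : ℚ)^2)
        = ((2*(i+m))! : ℚ) * ((m.choose j : ℚ))^2 / (((i)! : ℚ)^2 * ((m)! : ℚ)^2) := by
    intro j hj
    rw [Finset.mem_range] at hj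
    rw [Nat.cast_choose ℚ (show j ≤ m by omega)]
    have f1 : ((i)! : ℚ) ≠ 0 := by positivity
    have f2 : ((j)! : ℚ) ≠ 0 := by positivity
    have f3 : (((m-j))! : ℚ) ≠ 0 := by positivity
    have f4 : ((m)! : ℚ) ≠ 0 := by positivity
    field_simp
  rw [Finset.sum_congr rfl hstep]
  rw [← Finset.sum_div, ← Finset.mul_sum]
  have hv : (∑ j ∈ Finset.range (m+1), ((m.choose j : ℚ))^2) = ((2*m).choose m : ℚ) := by
    exact_mod_cast congrArg (fun x : ℕ => (x : ℚ)) (sum_choose_sq m)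
  rw [hv]
  rw [u_cast (i+m) m (by omega), show i+m-m = i by omega,
      Nat.cast_choose ℚ (show m ≤ 2*m by omega), show 2*m-m = m by omega]
  have f1 : ((i)! : ℚ) ≠ 0 := by positivity
  have f2 : ((m)! : ℚ) ≠ 0 := by positivity
  have f3 : (((2*m))! : ℚ) ≠ 0 := by positivity
  field_simp

lemma balanced_eq_Fc (n : ℕ) : balanced4Count n = Fc n := by
  have key : (balanced4Count n : ℚ) = (Fc n : ℚ) := by
    rw [balanced_eq_sum]
    push_cast
    rw [Finset.sum_sigma]
    dsimp only
    have h1 : ∀ i ∈ Finset.range (n+1),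
        ∑ j ∈ Finset.range (n+1-i), (Nat.multinomial S4 (cf i j (n-i-j)) : ℚ)
          = (u n (n-i) : ℚ) := by
      intro i hi
      rw [Finset.mem_range] at hi
      have hm : n = i + (n-i) := by omega
      have h2 : ∀ j ∈ Finset.range (n+1-i), (Nat.multinomial S4 (cf i j (n-i-j)) : ℚ)
          = ((2*n)! : ℚ) / (((i)! : ℚ)^2 * ((j)! : ℚ)^2 * (((n-i-j))! : ℚ)^2) := by
        intro j hj
        rw [Finset.mem_range] at hj
        exact multinomial_cast i j (n-i-j) n (by omega)
      rw [Finset.sum_congr rfl h2, show n+1-i = (n-i)+1 by omega]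
      have := innerSumQ i (n-i)
      rw [← hm] at this
      exact this
    rw [Finset.sum_congr rfl h1, Fc]
    push_cast
    have := Finset.sum_range_reflect (fun j => (u n j : ℚ)) (n+1)
    simp only [Nat.add_sub_cancel] at this
    exact this
  exact_mod_cast key


/-- The recurrence for the number of balanced `4 × 2n` 0-1 matrices. -/
theorem balanced4Count_recurrence (n : ℕ) (hn : 0 < n) :
    36 * (2 * (n : ℤ) + 3) * (2 * n + 1) * (n + 1) * (balanced4Count n : ℤ)
      - 2 * (2 * (n : ℤ) + 3) * (10 * n ^ 2 + 30 * n + 23) * (balanced4Count (n + 1) : ℤ)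
      + ((n : ℤ) + 2) ^ 3 * (balanced4Count (n + 2) : ℤ) = 0 := by
  have h := Fc_rec n
  rw [← balanced_eq_Fc n, ← balanced_eq_Fc (n+1), ← balanced_eq_Fc (n+2)] at h
  qify
  linarith [h]
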